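/- Given an initial proposal vector I, if there exists any stable marriage G' with G' ≤ I, then there exists a unique greatest stable marriage H ≤ I, and H minimizes the L1 distance to I among all stable marriages ≤ I. -/

import Mathlib

open Finset

/-- A stable marriage instance: `m` men, `w` women, complete strict preference lists.
`mpref i k` is the woman at rank `k` (rank `0` = most preferred) on man `i`'s list.
`wrank q p` is the rank of man `p` on woman `q`'s list (smaller = more preferred). -/
structure SM (m w : ℕ) where
  mpref : Fin m → (Fin w ≃ Fin w)
  wrank : Fin w → Fin m → ℕ
  wrank_inj : ∀ q : Fin w, Function.Injective (wrank q)

namespace SM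

variable {m w : ℕ} (S : SM m w)

/-- The woman that man `i` proposes to in proposal vector `G`. -/
def rho (G : Fin m → Fin w) (i : Fin m) : Fin w := S.mpref i (G i)

/-- `(p, q)` is a blocking pair for proposal vector `G`: `p` strictly prefers `q` to the
woman he proposes to in `G`, and `q` strictly prefers `p` to every man proposing to
her in `G` (vacuously true if she receives no proposal in `G`). -/
def Blocking (G : Fin m → Fin w) (p : Fin m) (q : Fin w) : Prop :=
  (S.mpref p).symm q < G p ∧ ∀ j : Fin m, S.rho G j = q → S.wrank q p < S.wrank q j

/-- `G` is a man-saturating matching: all men propose to distinct women. -/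
def Saturating (G : Fin m → Fin w) : Prop := Function.Injective (S.rho G)

/-- `G` is a stable marriage: a man-saturating matching with no blocking pair. -/
def Stable (G : Fin m → Fin w) : Prop :=
  S.Saturating G ∧ ∀ p q, ¬ S.Blocking G p q

/-- `numw G`: the number of distinct women who receive a proposal in some proposal
vector less than or equal to `G` (i.e. women whose rank on some man `i`'s list
is at most `G i`). -/
def numw (G : Fin m → Fin w) : ℕ :=
  (Finset.univ.filter fun q : Fin w => ∃ i : Fin m, (S.mpref i).symm q ≤ G i).card

/-- Man `i` is forbidden in `G`: there is another man `j` such that either both propose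
to the same woman in `G` and she prefers `j`, or `(j, ρ(G,i))` is a blocking pair in `G`. -/
def Forbidden (G : Fin m → Fin w) (i : Fin m) : Prop :=
  ∃ j : Fin m, j ≠ i ∧
    ((S.rho G j = S.rho G i ∧ S.wrank (S.rho G i) j < S.wrank (S.rho G i) i) ∨
      S.Blocking G j (S.rho G i))

/-- Man `i` is rForbidden in `G`: there is a woman `q` whom `i` strictly prefers to his
current proposal and who strictly prefers `i` to every other man who has proposed to her
in any proposal vector `≤ G`. -/
def RForbidden (G : Fin m → Fin w) (i : Fin m) : Prop :=
  ∃ q : Fin w, (S.mpref i).symm q < G i ∧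
    ∀ j : Fin m, j ≠ i → (S.mpref j).symm q ≤ G j → S.wrank q i < S.wrank q j

end SM

/-- The `L¹` (Manhattan) distance between two proposal vectors. -/
def pdist {m w : ℕ} (G H : Fin m → Fin w) : ℕ :=
  ∑ i, Nat.dist (G i : ℕ) (H i : ℕ)

namespace SM

variable {m w : ℕ} (S : SM m w)

/-- From stability: if man `p` strictly prefers woman `x` to his current proposal,
then some man `j` proposes to `x` in `G` and `x` strictly prefers `j` to `p`. -/
lemma exists_better {G : Fin m → Fin w} (hG : S.Stable G) {p : Fin m} {x : Fin w}
    (hlt : (S.mpref p).symm x < G p) :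
    ∃ j : Fin m, S.rho G j = x ∧ S.wrank x j < S.wrank x p := by
  have hnb := hG.2 p x
  rw [SM.Blocking] at hnb
  push_neg at hnb
  obtain ⟨j, hj, hjr⟩ := hnb hlt
  refine ⟨j, hj, lt_of_le_of_ne hjr ?_⟩
  intro he
  have hjp : j = p := S.wrank_inj x he
  subst hjp
  have : (S.mpref j).symm x = G j := by
    rw [← hj, SM.rho, Equiv.symm_apply_apply]
  exact absurd this (ne_of_lt hlt)

lemma symm_eq_of_rho {G : Fin m → Fin w} {j : Fin m} {x : Fin w}
    (hj : S.rho G j = x) : (S.mpref j).symm x = G j := by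
  rw [← hj, SM.rho, Equiv.symm_apply_apply]

/-- Step lemma: if man `i` strictly prefers his `G'`-proposal to his `G`-proposal,
then the man `j` who proposes in `G` to the woman `S.rho G' i` also strictly
prefers his `G'`-proposal to his `G`-proposal. -/
lemma step {G G' : Fin m → Fin w} (hG : S.Stable G) (hG' : S.Stable G')
    {i : Fin m} (hi : G' i < G i) :
    ∃ j : Fin m, S.rho G j = S.rho G' i ∧ G' j < G j := by
  have h1 : (S.mpref i).symm (S.rho G' i) < G i := by
    rw [S.symm_eq_of_rho rfl]; exact hi
  obtain ⟨j, hj, hjw⟩ := S.exists_better hG h1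
  refine ⟨j, hj, ?_⟩
  rcases lt_trichotomy (G' j) (G j) with h | h | h
  · exact h
  · exfalso
    have : S.rho G' j = S.rho G' i := by
      rw [SM.rho, h, ← SM.rho, hj]
    have := hG'.1 this
    subst this
    exact lt_irrefl _ hjw
  · exfalso
    have h2 : (S.mpref j).symm (S.rho G' i) < G' j := by
      rw [S.symm_eq_of_rho hj]; exact h
    obtain ⟨k, hk, hkw⟩ := S.exists_better hG' h2
    have : k = i := hG'.1 hk
    subst this
    omega

/-- The global impossibility: no woman `x` can be proposed to in `G` by a man who
strictly prefers `G'` and simultaneously proposed to in `G'` by a man who strictly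
prefers `G`. -/
lemma no_bad {G G' : Fin m → Fin w} (hG : S.Stable G) (hG' : S.Stable G')
    {p q : Fin m} {x : Fin w} (hp : S.rho G p = x) (hp2 : G' p < G p)
    (hq : S.rho G' q = x) (hq2 : G q < G' q) : False := by
  classical
  -- the "descent" map on the set of men strictly preferring `G'`
  set D := {i : Fin m // G' i < G i} with hD
  have f_ex : ∀ i : D, ∃ j : D, S.rho G (j : Fin m) = S.rho G' (i : Fin m) := by
    intro i
    obtain ⟨j, hj1, hj2⟩ := S.step hG hG' i.2
    exact ⟨⟨j, hj2⟩, hj1⟩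
  choose f hf using f_ex
  have finj : Function.Injective f := by
    intro a b hab
    have : S.rho G' (a : Fin m) = S.rho G' (b : Fin m) := by
      rw [← hf a, ← hf b, hab]
    exact Subtype.ext (hG'.1 this)
  have fsurj : Function.Surjective f := Finite.injective_iff_surjective.1 finj
  obtain ⟨⟨i, hilt⟩, hi⟩ := fsurj ⟨p, hp2⟩
  have hx : S.rho G' i = x := by
    rw [← hf ⟨i, hilt⟩, hi, hp]
  have hiq : i = q := hG'.1 (by rw [hx, hq])
  subst hiq
  omega

/-- Helper for the no-blocking part of the lattice lemma, assuming WLOG that the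
blocking man's entry in the sup comes from `G`. -/
lemma sup_noblock {G G' : Fin m → Fin w} (hG : S.Stable G) (hG' : S.Stable G')
    {p : Fin m} {x : Fin w} (hp : (G ⊔ G') p = G p)
    (h1 : (S.mpref p).symm x < (G ⊔ G') p)
    (h2 : ∀ j : Fin m, S.rho (G ⊔ G') j = x → S.wrank x p < S.wrank x j) : False := by
  rw [hp] at h1
  obtain ⟨j, hj, hjw⟩ := S.exists_better hG h1
  rcases le_or_gt (G' j) (G j) with hle | hlt
  · have hHj : (G ⊔ G') j = G j := sup_eq_left.2 hle
    have : S.rho (G ⊔ G') j = x := by rw [SM.rho, hHj]; exact hj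
    exact absurd (h2 j this) (not_lt.2 hjw.le)
  · -- j strictly prefers x (= his G-partner) to his G'-partner
    have hj' : (S.mpref j).symm x < G' j := by
      rw [S.symm_eq_of_rho hj]; exact hlt
    obtain ⟨k, hk, hkw⟩ := S.exists_better hG' hj'
    rcases le_or_gt (G k) (G' k) with hle2 | hlt2
    · have hHk : (G ⊔ G') k = G' k := sup_eq_right.2 hle2
      have : S.rho (G ⊔ G') k = x := by rw [SM.rho, hHk]; exact hk
      have := h2 k this
      omega
    · have hk' : (S.mpref k).symm x < G k := by
        rw [S.symm_eq_of_rho hk]; exact hlt2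
      obtain ⟨l, hl, hlw⟩ := S.exists_better hG hk'
      have : l = j := hG.1 (by rw [hl, hj])
      subst this
      omega

/-- The lattice lemma: the pointwise max of two stable marriages is stable. -/
lemma stable_sup {G G' : Fin m → Fin w} (hG : S.Stable G) (hG' : S.Stable G') :
    S.Stable (G ⊔ G') := by
  constructor
  · -- injectivity
    intro p q hpq
    by_contra hne
    -- the four cases for the values of the sup at `p` and `q`
    rcases max_cases (G p) (G' p) with ⟨hp, hple⟩ | ⟨hp, hplt⟩ <;>
      rcases max_cases (G q) (G' q) with ⟨hq, hqle⟩ | ⟨hq, hqlt⟩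
    all_goals (
      rw [SM.rho, SM.rho] at hpq
      simp only [Pi.sup_apply] at hpq
      rw [hp, hq] at hpq)
    · exact hne (hG.1 hpq)
    · -- p from G, q from G'
      have hxp : S.rho G p = S.rho G' q := hpq
      rcases eq_or_lt_of_le hple with heq | hlt
      · have : S.rho G' p = S.rho G' q := by
          rw [SM.rho, heq, ← SM.rho, hxp]
        exact hne (hG'.1 this)
      · exact S.no_bad hG hG' rfl hlt hxp.symm hqlt
    · -- p from G', q from G
      have hxp : S.rho G' p = S.rho G q := hpq
      rcases eq_or_lt_of_le hqle with heq | hlt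
      · have : S.rho G' q = S.rho G' p := by
          rw [SM.rho, heq, ← SM.rho, hxp.symm]
        exact hne (hG'.1 this).symm
      · exact S.no_bad hG hG' (G := G) (G' := G') hxp.symm hlt rfl hplt
    · exact hne (hG'.1 hpq)
  · intro p x hb
    obtain ⟨h1, h2⟩ := hb
    have hsp : (G ⊔ G') p = G p ∨ (G ⊔ G') p = G' p := by
      rcases max_cases (G p) (G' p) with ⟨hp, _⟩ | ⟨hp, _⟩
      · left; simpa using hp
      · right; simpa using hp
    rcases hsp with hp | hp
    · exact S.sup_noblock hG hG' hp h1 h2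
    · exact S.sup_noblock hG' hG (by rw [sup_comm]; exact hp)
        (by rw [sup_comm]; exact h1) (by intro j hj; exact h2 j (by rwa [sup_comm]))

end SM

/-- If some stable marriage lies below `I`, then there is a unique greatest stable
marriage `H ≤ I`, and `H` minimizes the `L¹` distance to `I` among all stable
marriages `≤ I`. -/
theorem stmt11 {m w : ℕ} (S : SM m w) (I : Fin m → Fin w)
    (h : ∃ G' : Fin m → Fin w, S.Stable G' ∧ G' ≤ I) :
    ∃ H : Fin m → Fin w, S.Stable H ∧ H ≤ I ∧
      (∀ G' : Fin m → Fin w, S.Stable G' → G' ≤ I → G' ≤ H) ∧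
      (∀ G' : Fin m → Fin w, S.Stable G' → G' ≤ I → pdist I H ≤ pdist I G') ∧
      (∀ H' : Fin m → Fin w,
        (S.Stable H' ∧ H' ≤ I ∧ ∀ G' : Fin m → Fin w, S.Stable G' → G' ≤ I → G' ≤ H') →
        H' = H) := by
  classical
  set T : Finset (Fin m → Fin w) :=
    Finset.univ.filter (fun G => S.Stable G ∧ G ≤ I) with hT
  have hmem : ∀ G : Fin m → Fin w, G ∈ T ↔ S.Stable G ∧ G ≤ I := by
    intro G; simp [hT]
  obtain ⟨G₀, hG₀s, hG₀le⟩ := h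
  have hTne : T.Nonempty := ⟨G₀, (hmem G₀).2 ⟨hG₀s, hG₀le⟩⟩
  set H : Fin m → Fin w := T.sup' hTne id with hH
  have hHmem : H ∈ {G : Fin m → Fin w | S.Stable G ∧ G ≤ I} := by
    refine Finset.sup'_mem {G : Fin m → Fin w | S.Stable G ∧ G ≤ I} ?_ T hTne id ?_
    · rintro x ⟨hx1, hx2⟩ y ⟨hy1, hy2⟩
      exact ⟨S.stable_sup hx1 hy1, sup_le hx2 hy2⟩
    · intro i hi; exact (hmem i).1 hi
  obtain ⟨hHs, hHle⟩ := hHmem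
  have hgreat : ∀ G' : Fin m → Fin w, S.Stable G' → G' ≤ I → G' ≤ H := by
    intro G' h1 h2
    exact Finset.le_sup' id ((hmem G').2 ⟨h1, h2⟩)
  refine ⟨H, hHs, hHle, hgreat, ?_, ?_⟩
  · intro G' h1 h2
    have hGH := hgreat G' h1 h2
    unfold pdist
    apply Finset.sum_le_sum
    intro i _
    rw [Nat.dist_eq_sub_of_le_right (by exact_mod_cast hHle i),
      Nat.dist_eq_sub_of_le_right (by exact_mod_cast h2 i)]
    have : (G' i : ℕ) ≤ H i := hGH i
    omega
  · rintro H' ⟨h1, h2, h3⟩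
    exact le_antisymm (hgreat H' h1 h2) (h3 H hHs hHle)
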